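/- Let the reward be the forward-looking corrected reward r(s, s') = −E(s → s') + α log P_B(s|s') for edges with s' ∈ S and r(s, s_f) = 0. Let π_b be a probability distribution over the edges s → s' of G with s' ∈ S, and define L_SQL = (1/2) Σ π_b(s, s') Δ_SQL(s, s')² and L_{FL-DB} = (1/2) Σ π_b(s, s') Δ_{FL-DB}(s, s')². Then, under the correspondence F̃(s) = Σ_{s'' ∈ Ch(s)} exp(Q(s, s'')/α) and P_F(s'|s) = exp(Q(s, s')/α)/F̃(s), the Soft Q-Learning objective is proportional to the Forward-Looking Detailed Balance objective: L_SQL = α² L_{FL-DB}. -/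
import Mathlib


/-- The flow induced by a soft Q-function:
`F(s) = Σ_{s'' ∈ Ch(s)} exp(Q(s,s'')/α)`. -/
noncomputable def Fq {V : Type*} [Fintype V] (E : V → V → Prop) [DecidableRel E]
    (α : ℝ) (Q : V → V → ℝ) (s : V) : ℝ :=
  ∑ t ∈ Finset.univ.filter (fun t => E s t), Real.exp (Q s t / α)

/-- The policy induced by a soft Q-function:
`P_F(s'|s) = exp(Q(s,s')/α) / F(s)`. -/
noncomputable def PFq {V : Type*} [Fintype V] (E : V → V → Prop) [DecidableRel E]
    (α : ℝ) (Q : V → V → ℝ) (s s' : V) : ℝ :=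
  Real.exp (Q s s' / α) / Fq E α Q s

/-- The soft value function induced by a soft Q-function:
`V_Q(s) = α log Σ_{s'' ∈ Ch(s)} exp(Q(s,s'')/α)` for `s ∈ S`, and `V_Q(s_f) = 0`. -/
noncomputable def VQ {V : Type*} [Fintype V] [DecidableEq V]
    (E : V → V → Prop) [DecidableRel E] (sf : V) (α : ℝ) (Q : V → V → ℝ) (s : V) : ℝ :=
  if s = sf then 0 else α * Real.log (Fq E α Q s)

/-- Sum of `f` over consecutive pairs of a list. -/
def pairSum {V : Type*} (f : V → V → ℝ) (l : List V) : ℝ :=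
  ((l.zip l.tail).map (fun p => f p.1 p.2)).sum

/-- `l` is a directed path from `a` to `b` in the graph with edge relation `E`. -/
def IsPath {V : Type*} (E : V → V → Prop) (a b : V) (l : List V) : Prop :=
  l.Chain' E ∧ l.head? = some a ∧ l.getLast? = some b

/-- The Forward-Looking Detailed Balance residual of an edge `s → s'` with `s' ∈ S`, under
the correspondence `F̃ = Fq`, `P_F = PFq`:
`Δ_{FL-DB}(s,s') = log(F̃(s') P_B(s|s')) - log(F̃(s) P_F(s'|s)) - E(s → s')/α`. -/
noncomputable def deltaFLDB {V : Type*} [Fintype V]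
    (E : V → V → Prop) [DecidableRel E] (α : ℝ)
    (Ee : V → V → ℝ) (PB : V → V → ℝ) (Q : V → V → ℝ) (s s' : V) : ℝ :=
  Real.log (Fq E α Q s' * PB s s') - Real.log (Fq E α Q s * PFq E α Q s s') - Ee s s' / α

/-- With the forward-looking corrected reward
`r(s,s') = -E(s → s') + α log P_B(s|s')` on edges with `s' ∈ S` and `r(s,s_f) = 0`, for any
probability distribution `π_b` over the edges `s → s'` with `s' ∈ S`, the Soft Q-Learning
objective is proportional to the Forward-Looking Detailed Balance objective:
`L_SQL = α² L_{FL-DB}`, under `F̃(s) = Σ_{s''} exp(Q(s,s'')/α)`,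
`P_F(s'|s) = exp(Q(s,s')/α)/F̃(s)`. -/
theorem sql_loss_eq_fl_db_loss
    {V : Type*} [Fintype V] [DecidableEq V]
    (E : V → V → Prop) [DecidableRel E] (s0 sf : V)
    (hacyc : ∀ v : V, ¬ Relation.TransGen E v v)
    (hsink : ∀ v : V, ¬ E sf v)
    (hreach : ∀ v : V, Relation.ReflTransGen E s0 v)
    (hchild : ∀ s : V, s ≠ sf → ∃ t : V, E s t)
    (α : ℝ) (hα : 0 < α)
    (En : V → ℝ)
    (Ee : V → V → ℝ)
    (hEe : ∀ (x : V) (l : List V), E x sf → IsPath E s0 x l → pairSum Ee l = En x)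
    (PB : V → V → ℝ)
    (hPBpos : ∀ s s' : V, E s s' → s' ≠ sf → 0 < PB s s')
    (hPBsum : ∀ s' : V, s' ≠ sf → s' ≠ s0 →
      ∑ s ∈ Finset.univ.filter (fun s => E s s'), PB s s' = 1)
    (r : V → V → ℝ)
    (hr : ∀ s s' : V, E s s' → s' ≠ sf →
      r s s' = -Ee s s' + α * Real.log (PB s s'))
    (hrf : ∀ x : V, E x sf → r x sf = 0)
    (Q : V → V → ℝ)
    -- π_b : a probability distribution over the edges s → s' with s' ∈ S
    (πb : V → V → ℝ)
    (hπb_nonneg : ∀ s s' : V, 0 ≤ πb s s')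
    (hπb_supp : ∀ s s' : V, πb s s' ≠ 0 → E s s' ∧ s' ≠ sf)
    (hπb_sum : ∑ s : V, ∑ s' : V, πb s s' = 1) :
    (1 / 2) * (∑ s : V, ∑ s' : V, πb s s' * (Q s s' - (r s s' + VQ E sf α Q s')) ^ 2)
      = α ^ 2 * ((1 / 2) *
          ∑ s : V, ∑ s' : V, πb s s' * (deltaFLDB E α Ee PB Q s s') ^ 2) := by
  have key : ∀ s s' : V, πb s s' * (Q s s' - (r s s' + VQ E sf α Q s')) ^ 2
      = α ^ 2 * (πb s s' * (deltaFLDB E α Ee PB Q s s') ^ 2) := by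
    intro s s'
    by_cases h : πb s s' = 0
    · simp [h]
    · obtain ⟨hE, hne⟩ := hπb_supp s s' h
      have hFpos : ∀ u w : V, E u w → 0 < Fq E α Q u := by
        intro u w hw
        apply Finset.sum_pos (fun t _ => Real.exp_pos _)
        exact ⟨w, Finset.mem_filter.mpr ⟨Finset.mem_univ _, hw⟩⟩
      have hFs : 0 < Fq E α Q s := hFpos s s' hE
      obtain ⟨t, ht⟩ := hchild s' hne
      have hFs' : 0 < Fq E α Q s' := hFpos s' t ht
      have hPB : 0 < PB s s' := hPBpos s s' hE hne
      have h1 : Real.log (Fq E α Q s' * PB s s')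
          = Real.log (Fq E α Q s') + Real.log (PB s s') :=
        Real.log_mul hFs'.ne' hPB.ne'
      have h2 : Fq E α Q s * PFq E α Q s s' = Real.exp (Q s s' / α) := by
        unfold PFq; field_simp
      have hd : deltaFLDB E α Ee PB Q s s'
          = Real.log (Fq E α Q s') + Real.log (PB s s') - Q s s' / α - Ee s s' / α := by
        unfold deltaFLDB
        rw [h1, h2, Real.log_exp]
      have hsql : Q s s' - (r s s' + VQ E sf α Q s')
          = -α * deltaFLDB E α Ee PB Q s s' := by
        rw [hd, hr s s' hE hne]
        unfold VQ
        rw [if_neg hne]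
        field_simp
        ring
      rw [hsql]
      ring
  calc (1 / 2) * (∑ s : V, ∑ s' : V, πb s s' * (Q s s' - (r s s' + VQ E sf α Q s')) ^ 2)
      = (1 / 2) * (∑ s : V, ∑ s' : V, α ^ 2 * (πb s s' * (deltaFLDB E α Ee PB Q s s') ^ 2)) := by
        congr 1
        exact Finset.sum_congr rfl fun s _ => Finset.sum_congr rfl fun s' _ => key s s'
    _ = α ^ 2 * ((1 / 2) * ∑ s : V, ∑ s' : V, πb s s' * (deltaFLDB E α Ee PB Q s s') ^ 2) := by
        simp only [← Finset.mul_sum]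
        ring
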